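/- Let b, c be real numbers with c > 0 and b(2b+1) + c ≠ 0. Set λ₁ = 2c/(b(2b+1)+c), p₁ = b(2b+1)/(b(2b+1)+c), p₂ = b(2b+1)/(2c). Then for every z ∈ (0,1), the function z ↦ λ₁ z^c (1−z)^(1/2−c) e^(−p₂z) [ ₂F₁(−b+1/2, b+1; c+1; z) − ₂F₁(−b−1/2, b; c; z) ] has derivative at z equal to z^c (1−z)^(−c−1/2) (1 − p₁z) e^(−p₂z) ₂F₁(−b−1/2, b; c; z). (Equivalently, ∫ z^c(1−z)^(−c−1/2)(1−p₁z)e^(−p₂z) ₂F₁(−b−1/2,b;c;z)dz = λ₁ z^c(1−z)^(1/2−c)e^(−p₂z)[₂F₁(−b+1/2,b+1;c+1;z) − ₂F₁(−b−1/2,b;c;z)] + c̃.) -/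

import Mathlib

open Real


noncomputable def dd (a b c : ℝ) (n : ℕ) : ℝ :=
  ((n.factorial : ℝ))⁻¹ * (ascPochhammer ℝ n).eval a * (ascPochhammer ℝ n).eval b *
    ((ascPochhammer ℝ n).eval c)⁻¹

lemma F_eq (a b c : ℝ) : (₂F₁ a b c : ℝ → ℝ) = fun t => ∑' n, dd a b c n * t ^ n := by
  rw [ordinaryHypergeometric_eq_tsum]
  funext t
  simp [dd, smul_eq_mul]

lemma radius_ge (a b c : ℝ) (hc : 0 < c) :
    1 ≤ (ordinaryHypergeometricSeries ℝ a b c).radius := by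
  by_cases ha : ∃ k : ℕ, (k : ℝ) = -a
  · obtain ⟨k, hk⟩ := ha
    have : a = -(k : ℝ) := by linarith
    rw [this, ordinaryHypergeometric_radius_top_of_neg_nat₁]
    exact le_top
  · by_cases hb : ∃ k : ℕ, (k : ℝ) = -b
    · obtain ⟨k, hk⟩ := hb
      have : b = -(k : ℝ) := by linarith
      rw [this, ordinaryHypergeometric_radius_top_of_neg_nat₂]
      exact le_top
    · push_neg at ha hb
      rw [ordinaryHypergeometricSeries_radius_eq_one]
      intro kn
      refine ⟨ha kn, hb kn, fun h => ?_⟩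
      have : (0:ℝ) ≤ (kn : ℝ) := Nat.cast_nonneg _
      linarith

lemma hasSum_dd (a b c : ℝ) (hc : 0 < c) {z : ℝ} (hz : |z| < 1) :
    HasSum (fun n => dd a b c n * z ^ n) (₂F₁ a b c z) := by
  have hmem : z ∈ Metric.eball (0 : ℝ) (ordinaryHypergeometricSeries ℝ a b c).radius := by
    rw [EMetric.mem_ball, edist_zero_right]
    refine lt_of_lt_of_le ?_ (radius_ge a b c hc)
    rw [show (1 : ENNReal) = ((1 : NNReal) : ENNReal) by simp]
    rw [Real.enorm_eq_ofReal_abs, ENNReal.coe_one, ENNReal.ofReal_lt_one]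
    simpa [Real.norm_eq_abs] using hz
  have := (ordinaryHypergeometricSeries ℝ a b c).hasSum hmem
  have h2 : (fun n => ordinaryHypergeometricSeries ℝ a b c n fun _ => z)
      = fun n => dd a b c n * z ^ n := by
    funext n
    rw [ordinaryHypergeometricSeries_apply_eq]
    simp [dd, smul_eq_mul]
  rw [h2] at this
  exact this


lemma poch_succ_left (x : ℝ) (n : ℕ) :
    (ascPochhammer ℝ (n + 1)).eval x = x * (ascPochhammer ℝ n).eval (x + 1) := by
  rw [ascPochhammer_succ_left]
  simp [Polynomial.eval_comp]

lemma coeffD (a b c : ℝ) (hc : 0 < c) (n : ℕ) :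
    ((n : ℝ) + 1) * dd a b c (n + 1) = (a * b / c) * dd (a + 1) (b + 1) (c + 1) n := by
  have hC : 0 < (ascPochhammer ℝ n).eval (c + 1) := ascPochhammer_pos n _ (by linarith)
  have hf : ((n.factorial : ℝ)) ≠ 0 := Nat.cast_ne_zero.2 n.factorial_ne_zero
  have hn1 : ((n : ℝ) + 1) ≠ 0 := by positivity
  unfold dd
  rw [poch_succ_left a, poch_succ_left b, poch_succ_left c, Nat.factorial_succ]
  push_cast
  field_simp

lemma coeffR (a b c : ℝ) (hc : 0 < c) (n : ℕ) :
    ((n : ℝ) + 1 + c) * dd (a + 1) (b + 1) (c + 1) (n + 1) =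
      ((n : ℝ) + 1 + a + b) * dd (a + 1) (b + 1) (c + 1) n + c * dd a b c (n + 1) := by
  have hC : 0 < (ascPochhammer ℝ n).eval (c + 1) := ascPochhammer_pos n _ (by linarith)
  have hf : ((n.factorial : ℝ)) ≠ 0 := Nat.cast_ne_zero.2 n.factorial_ne_zero
  have hn1 : ((n : ℝ) + 1) ≠ 0 := by positivity
  have hcn : (c + 1 + (n : ℝ)) ≠ 0 := by positivity
  unfold dd
  rw [poch_succ_left a, poch_succ_left b, poch_succ_left c,
    ascPochhammer_succ_eval, ascPochhammer_succ_eval, ascPochhammer_succ_eval,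
    Nat.factorial_succ]
  push_cast
  field_simp
  ring


lemma hyp_hasDerivAt (a b c : ℝ) (hc : 0 < c) {z : ℝ} (hz : |z| < 1) :
    HasDerivAt (₂F₁ a b c : ℝ → ℝ) ((a * b / c) * ₂F₁ (a + 1) (b + 1) (c + 1) z) z := by
  set r : ℝ := (|z| + 1) / 2 with hrdef
  have hr0 : 0 < r := by positivity
  have hzr : |z| < r := by simp only [hrdef]; linarith
  have hr1 : r < 1 := by simp only [hrdef]; linarith [abs_nonneg z]
  have hrabs : |r| < 1 := by rw [abs_of_nonneg hr0.le]; exact hr1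
  have hsum' : Summable (fun n => dd (a + 1) (b + 1) (c + 1) n * r ^ n) :=
    (hasSum_dd (a + 1) (b + 1) (c + 1) (by linarith) hrabs).summable
  have hu : Summable (fun n : ℕ => (n : ℝ) * |dd a b c n| * r ^ (n - 1)) := by
    rw [← summable_nat_add_iff 1]
    refine ((summable_abs_iff.2 hsum').mul_left |a * b / c|).congr fun n => ?_
    push_cast
    rw [show ((n : ℝ) + 1) * |dd a b c (n + 1)| * r ^ n
        = |((n : ℝ) + 1) * dd a b c (n + 1)| * r ^ n from by
      rw [abs_mul, abs_of_nonneg (by positivity : (0:ℝ) ≤ (n : ℝ) + 1)]]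
    rw [coeffD a b c hc n, abs_mul, abs_mul, abs_of_nonneg (pow_nonneg hr0.le n)]
    ring
  have hbound : ∀ n : ℕ, ∀ y ∈ Metric.ball (0 : ℝ) r,
      ‖dd a b c n * ((n : ℝ) * y ^ (n - 1))‖ ≤ (n : ℝ) * |dd a b c n| * r ^ (n - 1) := by
    intro n y hy
    rw [Metric.mem_ball, Real.dist_eq, sub_zero] at hy
    rw [Real.norm_eq_abs, abs_mul, abs_mul, abs_pow,
      abs_of_nonneg (by positivity : (0:ℝ) ≤ (n : ℝ))]
    rw [show |dd a b c n| * ((n : ℝ) * |y| ^ (n - 1))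
        = (n : ℝ) * |dd a b c n| * |y| ^ (n - 1) from by ring]
    have h1 : |y| ^ (n - 1) ≤ r ^ (n - 1) := pow_le_pow_left₀ (abs_nonneg y) hy.le _
    have h2 : (0:ℝ) ≤ (n : ℝ) * |dd a b c n| := by positivity
    exact mul_le_mul_of_nonneg_left h1 h2
  have H := hasDerivAt_tsum_of_isPreconnected hu Metric.isOpen_ball
    (convex_ball (0:ℝ) r).isPreconnected
    (fun (n : ℕ) (y : ℝ) (_ : y ∈ Metric.ball (0:ℝ) r) =>
      (hasDerivAt_pow n y).const_mul (dd a b c n))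
    hbound (Metric.mem_ball_self hr0)
    ((hasSum_dd a b c hc (by norm_num : |(0:ℝ)| < 1)).summable)
    (by rw [Metric.mem_ball, Real.dist_eq, sub_zero]; exact hzr)
  rw [F_eq a b c]
  refine H.congr_deriv (Eq.symm ?_)
  have hs : Summable (fun n => dd a b c n * ((n : ℝ) * z ^ (n - 1))) := by
    refine Summable.of_norm_bounded hu fun n => hbound n z ?_
    rw [Metric.mem_ball, Real.dist_eq, sub_zero]; exact hzr
  rw [Summable.tsum_eq_zero_add hs]
  simp only [Nat.cast_zero, zero_mul, mul_zero, zero_add]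
  calc (a * b / c) * ₂F₁ (a+1) (b+1) (c+1) z
      = (a * b / c) * ∑' n, dd (a + 1) (b + 1) (c + 1) n * z ^ n := by
        rw [(hasSum_dd (a+1) (b+1) (c+1) (by linarith) hz).tsum_eq]
    _ = ∑' n, (a * b / c) * (dd (a + 1) (b + 1) (c + 1) n * z ^ n) := by
        rw [tsum_mul_left]
    _ = _ := by
        refine tsum_congr fun n => ?_
        push_cast
        rw [show dd a b c (n+1) * (((n:ℝ)+1) * z ^ n) = (((n:ℝ)+1) * dd a b c (n+1)) * z ^ n
          from by ring, coeffD a b c hc n]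
        ring


lemma dd_zero (a b c : ℝ) : dd a b c 0 = 1 := by simp [dd]

lemma contig (a b c : ℝ) (hc : 0 < c) {z : ℝ} (hz : |z| < 1) :
    z * (1 - z) * ((a + 1) * (b + 1) / (c + 1) * ₂F₁ (a + 2) (b + 2) (c + 2) z)
      + (c - (a + b + 1) * z) * ₂F₁ (a + 1) (b + 1) (c + 1) z = c * ₂F₁ a b c z := by
  set gc : ℕ → ℝ := dd (a + 1) (b + 1) (c + 1) with hgc
  set ec : ℕ → ℝ := dd a b c with hec
  set Kv : ℝ := (a + 1) * (b + 1) / (c + 1) * ₂F₁ (a + 2) (b + 2) (c + 2) z with hKv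
  set Gz : ℝ := ₂F₁ (a + 1) (b + 1) (c + 1) z with hGz
  set Fz : ℝ := ₂F₁ a b c z with hFz
  have hc1 : (0:ℝ) < c + 1 := by linarith
  have hG : HasSum (fun n : ℕ => gc n * z ^ n) Gz := hasSum_dd _ _ _ hc1 hz
  have hS : HasSum (fun n : ℕ => ((n : ℝ) + 1) * gc (n + 1) * z ^ n) Kv := by
    have hK := (hasSum_dd (a + 2) (b + 2) (c + 2) (by linarith) hz).mul_left
      ((a + 1) * (b + 1) / (c + 1))
    have hfe : (fun n : ℕ => (a + 1) * (b + 1) / (c + 1) * (dd (a + 2) (b + 2) (c + 2) n * z ^ n))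
        = fun n : ℕ => ((n : ℝ) + 1) * gc (n + 1) * z ^ n := by
      funext n
      have h := coeffD (a + 1) (b + 1) (c + 1) hc1 n
      rw [show a + 1 + 1 = a + 2 by ring, show b + 1 + 1 = b + 2 by ring,
        show c + 1 + 1 = c + 2 by ring] at h
      rw [hgc]
      linear_combination z ^ n * h.symm
    rwa [hfe] at hK
  -- h1 : z * Kv
  have h1 : HasSum (fun n : ℕ => (n : ℝ) * gc n * z ^ n) (z * Kv) := by
    have := (hS.mul_left z)
    have hfe : (fun n : ℕ => z * (((n : ℝ) + 1) * gc (n + 1) * z ^ n))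
        = fun n : ℕ => ((n + 1 : ℕ) : ℝ) * gc (n + 1) * z ^ (n + 1) := by
      funext n; push_cast; ring
    rw [hfe] at this
    have := (hasSum_nat_add_iff (f := fun n : ℕ => (n : ℝ) * gc n * z ^ n) 1).1 this
    simpa using this
  -- h2 : z^2 * Kv
  have h2 : HasSum (fun n : ℕ => ((n - 1 : ℕ) : ℝ) * gc (n - 1) * z ^ n) (z ^ 2 * Kv) := by
    have := (hS.mul_left (z ^ 2))
    have hfe : (fun n : ℕ => z ^ 2 * (((n : ℝ) + 1) * gc (n + 1) * z ^ n))
        = fun n : ℕ => (((n + 2 - 1 : ℕ)) : ℝ) * gc (n + 2 - 1) * z ^ (n + 2) := by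
      funext n
      simp only [show ∀ k : ℕ, k + 2 - 1 = k + 1 from fun k => rfl]
      push_cast; ring
    rw [hfe] at this
    have := (hasSum_nat_add_iff (f := fun n : ℕ => ((n - 1 : ℕ) : ℝ) * gc (n - 1) * z ^ n) 2).1 this
    simpa [Finset.sum_range_succ] using this
  -- h3 : (a+b+1) * z * Gz
  have h3 : HasSum (fun n : ℕ => if n = 0 then 0 else (a + b + 1) * gc (n - 1) * z ^ n)
      ((a + b + 1) * z * Gz) := by
    have := (hG.mul_left ((a + b + 1) * z))
    have hfe : (fun n : ℕ => (a + b + 1) * z * (gc n * z ^ n))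
        = fun n : ℕ => if n + 1 = 0 then 0 else (a + b + 1) * gc (n + 1 - 1) * z ^ (n + 1) := by
      funext n
      simp only [Nat.add_sub_cancel, Nat.succ_ne_zero, if_false]
      push_cast; ring
    rw [hfe] at this
    have := (hasSum_nat_add_iff
      (f := fun n : ℕ => if n = 0 then 0 else (a + b + 1) * gc (n - 1) * z ^ n) 1).1 this
    simpa using this
  have h4 : HasSum (fun n : ℕ => c * (gc n * z ^ n)) (c * Gz) := hG.mul_left c
  have h5 : HasSum (fun n : ℕ => c * (ec n * z ^ n)) (c * Fz) :=
    (hasSum_dd a b c hc hz).mul_left c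
  have Htot := (((h1.sub h2).add h4).sub h3).sub h5
  have hzero : (fun n : ℕ => ((n : ℝ) * gc n * z ^ n - ((n - 1 : ℕ) : ℝ) * gc (n - 1) * z ^ n
      + c * (gc n * z ^ n) - if n = 0 then 0 else (a + b + 1) * gc (n - 1) * z ^ n)
      - c * (ec n * z ^ n)) = fun _ => (0 : ℝ) := by
    funext n
    match n with
    | 0 => simp [hgc, hec, dd_zero]
    | m + 1 =>
      simp only [Nat.succ_ne_zero, if_false, Nat.succ_sub_one, Nat.succ_eq_add_one,
        Nat.add_sub_cancel]
      have h := coeffR a b c hc m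
      push_cast
      rw [hgc, hec]
      linear_combination z ^ (m + 1) * h
  rw [hzero] at Htot
  have hT : z * Kv - z ^ 2 * Kv + c * Gz - (a + b + 1) * z * Gz - c * Fz = 0 :=
    Htot.unique hasSum_zero
  linear_combination hT


set_option maxHeartbeats 2000000 in
/-- New indefinite integral for the Gauss hypergeometric function: with
`λ₁ = 2c/(b(2b+1)+c)`, `p₁ = b(2b+1)/(b(2b+1)+c)`, `p₂ = b(2b+1)/(2c)`, for `c > 0` and
every `z ∈ (0,1)`, the function
`z ↦ λ₁ z^c (1-z)^(1/2-c) e^(-p₂z) [₂F₁(-b+1/2,b+1;c+1;z) - ₂F₁(-b-1/2,b;c;z)]`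
has derivative `z^c (1-z)^(-c-1/2) (1-p₁z) e^(-p₂z) ₂F₁(-b-1/2,b;c;z)` at `z`. -/
theorem hypergeometric_integral_exponential
    (b c lam p₁ p₂ : ℝ) (hc : 0 < c) (hbc : b * (2 * b + 1) + c ≠ 0)
    (hlam : lam = 2 * c / (b * (2 * b + 1) + c))
    (hp₁ : p₁ = b * (2 * b + 1) / (b * (2 * b + 1) + c))
    (hp₂ : p₂ = b * (2 * b + 1) / (2 * c)) :
    ∀ z ∈ Set.Ioo (0 : ℝ) 1,
      HasDerivAt
        (fun t => lam * t ^ c * (1 - t) ^ (1 / 2 - c) * Real.exp (-p₂ * t)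
          * (₂F₁ (-b + 1 / 2) (b + 1) (c + 1) t - ₂F₁ (-b - 1 / 2) b c t))
        (z ^ c * (1 - z) ^ (-c - 1 / 2) * (1 - p₁ * z) * Real.exp (-p₂ * z)
          * ₂F₁ (-b - 1 / 2) b c z) z := by
  rintro z ⟨hz0, hz1⟩
  have habs : |z| < 1 := abs_lt.2 ⟨by linarith, hz1⟩
  have h1z : (0:ℝ) < 1 - z := by linarith
  -- derivative of F
  have hFd : HasDerivAt (₂F₁ (-b - 1 / 2) b c : ℝ → ℝ)
      (((-b - 1 / 2) * b / c) * ₂F₁ (-b + 1 / 2) (b + 1) (c + 1) z) z := by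
    have := hyp_hasDerivAt (-b - 1/2) b c hc habs
    rwa [show -b - 1/2 + 1 = -b + 1/2 by ring] at this
  -- derivative of G
  have hGd : HasDerivAt (₂F₁ (-b + 1 / 2) (b + 1) (c + 1) : ℝ → ℝ)
      (((-b + 1 / 2) * (b + 1) / (c + 1)) * ₂F₁ (-b + 3 / 2) (b + 2) (c + 2) z) z := by
    have := hyp_hasDerivAt (-b + 1/2) (b + 1) (c + 1) (by linarith) habs
    rwa [show -b + 1/2 + 1 = -b + 3/2 by ring, show b + 1 + 1 = b + 2 by ring,
      show c + 1 + 1 = c + 2 by ring] at this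
  -- contiguous relation
  have hrel := contig (-b - 1/2) b c hc habs
  rw [show -b - 1/2 + 1 = -b + 1/2 by ring, show -b - 1/2 + 2 = -b + 3/2 by ring] at hrel
  set Kz : ℝ := ₂F₁ (-b + 3/2) (b + 2) (c + 2) z with hKz
  set Gz : ℝ := ₂F₁ (-b + 1/2) (b + 1) (c + 1) z with hGz
  set Fz : ℝ := ₂F₁ (-b - 1/2) b c z with hFz
  -- power/exp derivatives
  have hpow : HasDerivAt (fun t : ℝ => lam * t ^ c) (lam * (c * z ^ (c - 1))) z :=
    (Real.hasDerivAt_rpow_const (Or.inl hz0.ne')).const_mul lam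
  have hone : HasDerivAt (fun t : ℝ => (1 - t) ^ (1/2 - c))
      ((1/2 - c) * (1 - z) ^ (1/2 - c - 1) * (-1)) z := by
    have inner : HasDerivAt (fun t : ℝ => 1 - t) (-1) z := (hasDerivAt_id z).const_sub 1
    exact (Real.hasDerivAt_rpow_const (p := 1/2 - c) (Or.inl h1z.ne')).comp z inner
  have hexp : HasDerivAt (fun t : ℝ => Real.exp (-p₂ * t))
      (Real.exp (-p₂ * z) * (-p₂ * 1)) z :=
    ((hasDerivAt_id z).const_mul (-p₂)).exp
  have H := (((hpow.mul hone).mul hexp).mul (hGd.sub hFd))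
  refine H.congr_deriv (Eq.symm ?_)
  simp only [Pi.mul_apply, Pi.sub_apply]
  -- now the algebraic identity
  have e1 : z ^ (c - 1) = z ^ c / z := by rw [Real.rpow_sub hz0, Real.rpow_one]
  have e2 : (1 - z) ^ (1/2 - c) = (1 - z) ^ (-c - 1/2) * (1 - z) := by
    rw [show (1/2 - c) = (-c - 1/2) + 1 by ring, Real.rpow_add h1z, Real.rpow_one]
  have e3 : (1 - z) ^ (1/2 - c - 1) = (1 - z) ^ (-c - 1/2) := by
    rw [show (1/2 - c - 1) = -c - 1/2 by ring]
  have hzz : z * (1 - z) ≠ 0 := by positivity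
  have hν : ((-b + 1 / 2) * (b + 1) / (c + 1)) * Kz
      = (c * Fz - (c - 1/2 * z) * Gz) / (z * (1 - z)) := by
    rw [eq_div_iff hzz]
    linear_combination hrel
  have h1zne : (1 - z) ≠ 0 := h1z.ne'
  rw [← hGz, ← hFz, e1, e2, e3, hν]
  generalize z ^ c = P
  generalize (1 - z) ^ (-c - 1/2) = Q
  generalize Real.exp (-p₂ * z) = E
  generalize Fz = F₀
  generalize Gz = G₀
  rw [hlam, hp₁, hp₂]
  field_simp
  linear_combination (-(P * Q * z * E * F₀)) * mul_inv_cancel₀ hbc
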